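/- Let ν be a probability measure on D × ℝ^d such that ∫ 𝓐_{v,w} g(x) dν(x,w) = 0 for all g ∈ C²(D) ∩ C(closure D) (an infinitesimal ergodic occupation measure), and suppose ψ ∈ C²(D) ∩ C(closure D) satisfies L_v ψ + (1/2)|σᵀ∇ψ|² = −λ on D. Then λ + (1/2)∫ |σ(x)ᵀ(w − ∇ψ(x))|² dν = (1/2)∫ |σ(x)ᵀ w|² dν. In particular (1/2)∫|σ(x)ᵀw|² dν(x,w) ≥ λ. -/

import Mathlib

open Matrix MeasureTheory Real

/-- Gradient of `f : ℝ^d → ℝ` at `x`. -/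
noncomputable def grad {d : ℕ} (f : (Fin d → ℝ) → ℝ) (x : Fin d → ℝ) : Fin d → ℝ :=
  fun i => fderiv ℝ f x (Pi.single i 1)

/-- Hessian matrix of `f` at `x`. -/
noncomputable def hess {d : ℕ} (f : (Fin d → ℝ) → ℝ) (x : Fin d → ℝ) :
    Matrix (Fin d) (Fin d) ℝ :=
  Matrix.of fun i j => fderiv ℝ (fun y => grad f y j) x (Pi.single i 1)

/-- The operator `L_v f = (1/2) tr(a ∇²f) + ⟨m_v, ∇f⟩`, with `a = σσᵀ`. -/
noncomputable def Lop {d : ℕ} (σ : (Fin d → ℝ) → Matrix (Fin d) (Fin d) ℝ)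
    (m : (Fin d → ℝ) → Fin d → ℝ) (f : (Fin d → ℝ) → ℝ) (x : Fin d → ℝ) : ℝ :=
  (1 / 2) * (σ x * (σ x)ᵀ * hess f x).trace + m x ⬝ᵥ grad f x

/-- Squared Euclidean norm `|σ(x)ᵀ v|²`. -/
noncomputable def sqσ {d : ℕ} (σ : (Fin d → ℝ) → Matrix (Fin d) (Fin d) ℝ)
    (x v : Fin d → ℝ) : ℝ :=
  ((σ x)ᵀ *ᵥ v) ⬝ᵥ ((σ x)ᵀ *ᵥ v)

lemma sqσ_nonneg {d : ℕ} (σ : (Fin d → ℝ) → Matrix (Fin d) (Fin d) ℝ)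
    (x v : Fin d → ℝ) : 0 ≤ sqσ σ x v := by
  unfold sqσ dotProduct
  exact Finset.sum_nonneg fun i _ => mul_self_nonneg _

lemma aux_dot {d : ℕ} (A : Matrix (Fin d) (Fin d) ℝ) (w g : Fin d → ℝ) :
    ((A * Aᵀ) *ᵥ w) ⬝ᵥ g = (Aᵀ *ᵥ w) ⬝ᵥ (Aᵀ *ᵥ g) := by
  rw [← Matrix.mulVec_mulVec, dotProduct_comm, Matrix.dotProduct_mulVec,
    ← Matrix.mulVec_transpose, dotProduct_comm]

lemma sqσ_expand {d : ℕ} (σ : (Fin d → ℝ) → Matrix (Fin d) (Fin d) ℝ)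
    (x w g : Fin d → ℝ) :
    sqσ σ x (w - g) = sqσ σ x w - 2 * (((σ x)ᵀ *ᵥ w) ⬝ᵥ ((σ x)ᵀ *ᵥ g)) + sqσ σ x g := by
  unfold sqσ
  rw [Matrix.mulVec_sub, sub_dotProduct, dotProduct_sub, dotProduct_sub,
    dotProduct_comm ((σ x)ᵀ *ᵥ g) ((σ x)ᵀ *ᵥ w)]
  ring

theorem stmt9 {d : ℕ} (D : Set (Fin d → ℝ)) (hD : IsOpen D)
    (hDb : Bornology.IsBounded D)
    (σ : (Fin d → ℝ) → Matrix (Fin d) (Fin d) ℝ)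
    (m : (Fin d → ℝ) → Fin d → ℝ) (lam : ℝ)
    -- the operator `𝓐_{v,w} f(x) = L_v f(x) + ⟨a(x) w, ∇f(x)⟩`
    (Avw : ((Fin d → ℝ) → ℝ) → (Fin d → ℝ) → (Fin d → ℝ) → ℝ)
    (hAvw : ∀ f x w, Avw f x w = Lop σ m f x + ((σ x * (σ x)ᵀ) *ᵥ w) ⬝ᵥ grad f x)
    (ν : Measure ((Fin d → ℝ) × (Fin d → ℝ))) [IsProbabilityMeasure ν]
    (hνD : ν {p | p.1 ∉ D} = 0)
    -- ν is an infinitesimal ergodic occupation measure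
    (hocc : ∀ g : (Fin d → ℝ) → ℝ, ContDiffOn ℝ 2 g D → ContinuousOn g (closure D) →
      ∫ p, Avw g p.1 p.2 ∂ν = 0)
    (ψ : (Fin d → ℝ) → ℝ) (hψ : ContDiffOn ℝ 2 ψ D) (hψc : ContinuousOn ψ (closure D))
    (heig : ∀ x ∈ D, Lop σ m ψ x + (1 / 2) * sqσ σ x (grad ψ x) = -lam)
    (hint1 : Integrable (fun p => sqσ σ p.1 p.2) ν)
    (hint2 : Integrable (fun p => sqσ σ p.1 (p.2 - grad ψ p.1)) ν) :
    lam + (1 / 2) * ∫ p, sqσ σ p.1 (p.2 - grad ψ p.1) ∂ν =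
        (1 / 2) * ∫ p, sqσ σ p.1 p.2 ∂ν ∧
      lam ≤ (1 / 2) * ∫ p, sqσ σ p.1 p.2 ∂ν := by
  have key : ∀ p : (Fin d → ℝ) × (Fin d → ℝ), p.1 ∈ D →
      Avw ψ p.1 p.2 =
        -lam + (1 / 2) * (sqσ σ p.1 p.2 - sqσ σ p.1 (p.2 - grad ψ p.1)) := by
    intro p hp
    have h1 := heig p.1 hp
    rw [hAvw, aux_dot, sqσ_expand]
    linarith
  have hae : (fun p => Avw ψ p.1 p.2) =ᵐ[ν]
      fun p => -lam + (1 / 2) * (sqσ σ p.1 p.2 - sqσ σ p.1 (p.2 - grad ψ p.1)) := by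
    refine Filter.eventuallyEq_of_mem (s := {p | p.1 ∈ D}) ?_ key
    rw [mem_ae_iff]
    have hs : {p : (Fin d → ℝ) × (Fin d → ℝ) | p.1 ∈ D}ᶜ = {p | p.1 ∉ D} := by
      ext p; simp
    rw [hs]; exact hνD
  have h0 : ∫ p, Avw ψ p.1 p.2 ∂ν = 0 := hocc ψ hψ hψc
  have hI : ∫ p, (-lam + (1 / 2) * (sqσ σ p.1 p.2 - sqσ σ p.1 (p.2 - grad ψ p.1))) ∂ν = 0 := by
    rw [← integral_congr_ae hae, h0]
  have hintc : Integrable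
      (fun p : (Fin d → ℝ) × (Fin d → ℝ) =>
        (1 / 2 : ℝ) * (sqσ σ p.1 p.2 - sqσ σ p.1 (p.2 - grad ψ p.1))) ν :=
    (hint1.sub hint2).const_mul _
  rw [integral_add (integrable_const _) hintc,
    integral_const_mul, integral_sub hint1 hint2, integral_const] at hI
  simp only [measure_univ, probReal_univ, ENNReal.toReal_one, smul_eq_mul, one_mul] at hI
  constructor
  · linarith
  · have h2 : 0 ≤ ∫ p, sqσ σ p.1 (p.2 - grad ψ p.1) ∂ν :=
      integral_nonneg fun p => sqσ_nonneg _ _ _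
    linarith
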